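/- For every irrational α ∈ ℝ and every β ∈ ℝ, the map T : 𝕋² → 𝕋² induced by (x, y) ↦ (x + α, y + x + β) on ℝ²/ℤ² is minimal: for every point z ∈ 𝕋², the forward orbit {Tⁿ(z) : n ∈ ℕ} is dense in 𝕋². -/

import Mathlib

open Set Filter Topology

private lemma exists_minimal_invariant {X : Type*} [TopologicalSpace X] [CompactSpace X]
    {f : X → X} {S : Set X} (hS : IsClosed S) (hne : S.Nonempty) (hinv : f '' S ⊆ S) :
    ∃ M : Set X, M ⊆ S ∧ M.Nonempty ∧ IsClosed M ∧ f '' M ⊆ M ∧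
      ∀ N : Set X, N ⊆ M → N.Nonempty → IsClosed N → f '' N ⊆ N → N = M := by
  have hz : ∀ c ⊆ {N : Set X | N.Nonempty ∧ IsClosed N ∧ f '' N ⊆ N}, IsChain (· ⊆ ·) c →
      c.Nonempty → ∃ lb ∈ {N : Set X | N.Nonempty ∧ IsClosed N ∧ f '' N ⊆ N}, ∀ s ∈ c, lb ⊆ s := by
    intro c hc hchain hcne
    haveI : Nonempty c := hcne.to_subtype
    have hdir : DirectedOn (· ⊇ ·) c := fun A hA B hB =>
      (hchain.total hA hB).elim (fun h => ⟨A, hA, subset_rfl, h⟩) fun h => ⟨B, hB, h, subset_rfl⟩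
    have hne' : (⋂₀ c).Nonempty :=
      IsCompact.nonempty_sInter_of_directed_nonempty_isCompact_isClosed hdir
        (fun U hU => (hc hU).1) (fun U hU => (hc hU).2.1.isCompact) fun U hU => (hc hU).2.1
    refine ⟨⋂₀ c, ⟨hne', isClosed_sInter fun U hU => (hc hU).2.1, ?_⟩, fun s hs => sInter_subset_of_mem hs⟩
    intro y hy
    rcases hy with ⟨x, hx, rfl⟩
    exact fun U hU => (hc hU).2.2 ⟨x, (sInter_subset_of_mem hU) hx, rfl⟩
  obtain ⟨M, hMS, hMmin⟩ :=
    zorn_superset_nonempty {N : Set X | N.Nonempty ∧ IsClosed N ∧ f '' N ⊆ N} hz S ⟨hne, hS, hinv⟩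
  refine ⟨M, hMS, hMmin.1.1, hMmin.1.2.1, hMmin.1.2.2, fun N hNM hNne hNcl hNinv => ?_⟩
  exact subset_antisymm hNM (hMmin.2 ⟨hNne, hNcl, hNinv⟩ hNM)

private lemma closed_subgroup_classification (K : AddSubgroup UnitAddCircle)
    (hK : IsClosed (K : Set UnitAddCircle)) :
    K = ⊤ ∨ ∃ m : ℕ, 0 < m ∧ ∀ h ∈ K, m • h = 0 := by
  set π : ℝ →+ UnitAddCircle := QuotientAddGroup.mk' (AddSubgroup.zmultiples (1 : ℝ)) with hπ
  have hπc : Continuous π := AddCircle.continuous_mk' 1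
  have hπs : Function.Surjective π := QuotientAddGroup.mk'_surjective _
  have hπcoe : ∀ r : ℝ, π r = (r : UnitAddCircle) := fun r => rfl
  set K' : AddSubgroup ℝ := K.comap π with hK'
  have hK'cl : IsClosed (K' : Set ℝ) := hK.preimage hπc
  rcases AddSubgroup.dense_or_cyclic K' with hdense | ⟨g, hg⟩
  · left
    have : (K' : Set ℝ) = univ := hK'cl.closure_eq ▸ hdense.closure_eq
    rw [eq_top_iff]
    rintro y -
    obtain ⟨r, rfl⟩ := hπs y
    have hr : r ∈ (K' : Set ℝ) := this ▸ mem_univ r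
    exact hr
  · right
    have h1 : (1 : ℝ) ∈ K' := by
      show π 1 ∈ K
      rw [hπcoe, AddCircle.coe_period]
      exact K.zero_mem
    rw [hg, AddSubgroup.mem_closure_singleton] at h1
    obtain ⟨k, hk⟩ := h1
    have hk0 : k ≠ 0 := by rintro rfl; simp at hk
    refine ⟨k.natAbs, Int.natAbs_pos.2 hk0, fun h hh => ?_⟩
    obtain ⟨r, rfl⟩ := hπs h
    have hr : r ∈ K' := hh
    rw [hg, AddSubgroup.mem_closure_singleton] at hr
    obtain ⟨j, hj⟩ := hr
    have : (k.natAbs : ℤ) • r = j • ((k.natAbs : ℤ) • g) := by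
      rw [← hj, smul_comm]
    have hmain : (k.natAbs : ℕ) • r = j • ((k.natAbs : ℤ) • g) := by
      rw [natCast_zsmul] at this; exact_mod_cast this
    rw [← map_nsmul, hmain]
    rcases Int.natAbs_eq k with he | he
    · rw [← he, hk, map_zsmul, hπcoe, AddCircle.coe_period, smul_zero]
    · have : (k.natAbs : ℤ) • g = -(1 : ℝ) := by
        have : (k.natAbs : ℤ) = -k := by omega
        rw [this, neg_zsmul, hk]
      rw [this, map_zsmul, hπcoe]
      show j • (-((1 : ℝ) : UnitAddCircle)) = 0
      rw [AddCircle.coe_period]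
      simp

/-- The skew translation `(x, y) ↦ (x + α, y + x + β)` on the 2-torus `𝕋² = (ℝ/ℤ) × (ℝ/ℤ)`. -/
noncomputable def skewTranslation (α β : ℝ) :
    UnitAddCircle × UnitAddCircle → UnitAddCircle × UnitAddCircle :=
  fun z => (z.1 + (α : UnitAddCircle), z.2 + z.1 + (β : UnitAddCircle))

theorem stmt3 (α β : ℝ) (hα : Irrational α) (z : UnitAddCircle × UnitAddCircle) :
    Dense {w : UnitAddCircle × UnitAddCircle | ∃ n : ℕ, w = (skewTranslation α β)^[n] z} := by
  classical
  set a : UnitAddCircle := (α : UnitAddCircle) with ha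
  set b : UnitAddCircle := (β : UnitAddCircle) with hb
  set T := skewTranslation α β with hT
  have hTc : Continuous T := by
    rw [hT]; unfold skewTranslation; fun_prop
  set orb : Set (UnitAddCircle × UnitAddCircle) := {w | ∃ n : ℕ, w = T^[n] z} with horb
  have horbinv : T '' orb ⊆ orb := by
    rintro _ ⟨w, ⟨n, rfl⟩, rfl⟩
    exact ⟨n + 1, (Function.iterate_succ_apply' T n z).symm⟩
  have hΩinv : T '' closure orb ⊆ closure orb :=
    (image_closure_subset_closure_image hTc).trans (closure_mono horbinv)
  obtain ⟨M, hMΩ, hMne, hMcl, hMinv, hMmin⟩ :=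
    exists_minimal_invariant (f := T) (S := closure orb) isClosed_closure
      ⟨z, subset_closure ⟨0, rfl⟩⟩ hΩinv
  have hMcpt : IsCompact M := hMcl.isCompact
  have hTM : T '' M = M :=
    hMmin _ hMinv (hMne.image T) (hMcpt.image hTc).isClosed (image_mono hMinv)
  -- first coordinate projection
  set C : Set UnitAddCircle := Prod.fst '' M with hC
  have hCcl : IsClosed C := (hMcpt.image continuous_fst).isClosed
  have hCadd : (fun x => x + a) '' C = C := by
    have h1 : Prod.fst '' (T '' M) = (fun x => x + a) '' (Prod.fst '' M) := by
      rw [image_image, image_image]; rfl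
    rw [hC, ← h1, hTM]
  have hCmem_add : ∀ c ∈ C, c + a ∈ C := fun c hc => hCadd ▸ mem_image_of_mem _ hc
  have hCmem_sub : ∀ c ∈ C, c - a ∈ C := by
    intro c hc
    rw [← hCadd] at hc
    obtain ⟨c', hc', hcc⟩ := hc
    simp only at hcc
    have h4 : c - a = c' := by rw [← hcc]; exact add_sub_cancel_right c' a
    rwa [h4]
  have hCz : ∀ (n : ℤ), ∀ c ∈ C, c + n • a ∈ C := by
    intro n
    induction n using Int.induction_on with
    | zero => simpa using fun c hc => hc
    | succ k ih =>
      intro c hc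
      have h2 := hCmem_add _ (ih c hc)
      have h3 : c + ((k : ℤ) + 1) • a = c + (k : ℤ) • a + a := by
        rw [add_zsmul, one_zsmul]; abel
      rwa [h3]
    | pred k ih =>
      intro c hc
      have h2 := hCmem_sub _ (ih c hc)
      have h3 : c + (-(k : ℤ) - 1) • a = c + (-(k : ℤ)) • a - a := by
        rw [sub_zsmul, one_zsmul]; abel
      rwa [h3]
  have hsmul_ne : ∀ m : ℕ, 0 < m → m • a ≠ 0 := by
    intro m hm hma
    rw [ha, ← AddCircle.coe_nsmul, AddCircle.coe_eq_zero_iff] at hma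
    obtain ⟨j, hj⟩ := hma
    simp only [zsmul_eq_mul, mul_one, nsmul_eq_mul] at hj
    exact (hα.natCast_mul hm.ne').ne_int j hj.symm
  have hdense : ∀ t : UnitAddCircle, t ∈ closure ((AddSubgroup.zmultiples a : AddSubgroup UnitAddCircle) : Set UnitAddCircle) := by
    have hclosed := (AddSubgroup.zmultiples a).isClosed_topologicalClosure
    rcases closed_subgroup_classification ((AddSubgroup.zmultiples a).topologicalClosure) hclosed
      with htop | ⟨m, hm, hann⟩
    · intro t
      have ht : t ∈ (AddSubgroup.zmultiples a).topologicalClosure := htop ▸ AddSubgroup.mem_top t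
      exact ht
    · exact absurd
        (hann a ((AddSubgroup.le_topologicalClosure _) (AddSubgroup.mem_zmultiples a)))
        (hsmul_ne m hm)
  have hCuniv : C = univ := by
    obtain ⟨p, hp⟩ := hMne
    have hc0 : p.1 ∈ C := mem_image_of_mem _ hp
    have hsubs : ((AddSubgroup.zmultiples a : AddSubgroup UnitAddCircle) : Set UnitAddCircle) ⊆ {t | p.1 + t ∈ C} := by
      intro t ht
      obtain ⟨n, rfl⟩ := AddSubgroup.mem_zmultiples_iff.mp ht
      exact hCz n _ hc0
    have hclosed' : IsClosed {t | p.1 + t ∈ C} := hCcl.preimage (by fun_prop)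
    have hall : ∀ t, p.1 + t ∈ C := fun t =>
      (hclosed'.closure_subset ((closure_mono hsubs) (hdense t)))
    ext x
    simp only [mem_univ, iff_true]
    have h5 := hall (x - p.1)
    have h6 : p.1 + (x - p.1) = x := by abel
    rwa [h6] at h5
  -- vertical translations
  set V : UnitAddCircle → (UnitAddCircle × UnitAddCircle) → UnitAddCircle × UnitAddCircle :=
    fun s p => (p.1, p.2 + s) with hV
  have hVc : ∀ s, Continuous (V s) := by intro s; rw [hV]; fun_prop
  have hVT : ∀ s p, T (V s p) = V s (T p) := by
    intro s p
    show ((p.1 + a), (p.2 + s) + p.1 + b) = (p.1 + a, (p.2 + p.1 + b) + s)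
    rw [Prod.mk.injEq]
    exact ⟨rfl, by abel⟩
  have hVim : ∀ s, T '' (V s '' M) = V s '' M := by
    intro s
    rw [image_image]
    simp only [hVT]
    rw [← image_image, hTM]
  have hsub_mem : ∀ s, V s '' M ⊆ M → V s '' M = M := fun s hs =>
    hMmin _ hs (hMne.image _) ((hMcpt.image (hVc s)).isClosed) (by rw [hVim s])
  have hVcancel : ∀ s, (fun p => V s (V (-s) p)) = id := by
    intro s; funext p; simp [hV]
  have hVcancel' : ∀ s, (fun p => V (-s) (V s p)) = id := by
    intro s; funext p; simp [hV]
  have hdich : ∀ s, (V s '' M ∩ M).Nonempty → V s '' M = M := by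
    intro s hne'
    have hNcl : IsClosed (V s '' M ∩ M) := ((hMcpt.image (hVc s)).isClosed).inter hMcl
    have hNinv : T '' (V s '' M ∩ M) ⊆ V s '' M ∩ M := by
      rintro _ ⟨x, ⟨hx1, hx2⟩, rfl⟩
      exact ⟨(hVim s) ▸ mem_image_of_mem T hx1, hTM ▸ mem_image_of_mem T hx2⟩
    have hNM := hMmin _ inter_subset_right hne' hNcl hNinv
    have hMsub : M ⊆ V s '' M := by
      intro y hy
      rw [← hNM] at hy
      exact hy.1
    have hneg : V (-s) '' M ⊆ M := by
      rintro _ ⟨x, hx, rfl⟩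
      obtain ⟨x', hx', hxx⟩ := hMsub hx
      rw [← hxx]
      show (fun p => V (-s) (V s p)) x' ∈ M
      rw [hVcancel' s]
      exact hx'
    have h2 := hsub_mem _ hneg
    have h3 := congrArg (Set.image (V s)) h2
    rw [image_image, hVcancel s, image_id] at h3
    exact h3.symm
  -- the subgroup of vertical periods
  set HK : AddSubgroup UnitAddCircle :=
    { carrier := {s | V s '' M = M}
      zero_mem' := by
        show V 0 '' M = M
        have : V 0 = id := by funext p; simp [hV]
        rw [this, image_id]
      add_mem' := by
        intro s t hs ht
        show V (s + t) '' M = M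
        have h1 : V (s + t) = fun p => V t (V s p) := by funext p; simp [hV, add_assoc]
        rw [h1, ← image_image, hs, ht]
      neg_mem' := by
        intro s hs
        have hs' : V s '' M = M := hs
        show V (-s) '' M = M
        conv_lhs => rw [← hs']
        rw [image_image, hVcancel' s, image_id] } with hHK
  have hHcl : IsClosed (HK : Set UnitAddCircle) := by
    apply isClosed_of_closure_subset
    intro t ht
    apply hsub_mem
    rintro _ ⟨p, hp, rfl⟩
    have hcont : Continuous fun s => V s p := by rw [hV]; fun_prop
    have himg : (fun s => V s p) '' (HK : Set UnitAddCircle) ⊆ M := by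
      rintro _ ⟨s, hs, rfl⟩
      have hs' : V s '' M = M := hs
      exact hs' ▸ mem_image_of_mem _ hp
    exact hMcl.closure_subset
      ((closure_mono himg) (image_closure_subset_closure_image hcont (mem_image_of_mem _ ht)))
  rcases closed_subgroup_classification HK hHcl with htop | ⟨m, hm, hann⟩
  · -- M = univ, so the orbit is dense
    have hMuniv : M = univ := by
      ext p
      simp only [mem_univ, iff_true]
      have hx : p.1 ∈ C := hCuniv ▸ mem_univ _
      obtain ⟨q, hq, hq1⟩ := hx
      have hs : (p.2 - q.2) ∈ HK := htop ▸ AddSubgroup.mem_top _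
      have hs' : V (p.2 - q.2) '' M = M := hs
      rw [← hs']
      refine ⟨q, hq, ?_⟩
      show (q.1, q.2 + (p.2 - q.2)) = p
      rw [Prod.mk.injEq]
      exact ⟨hq1, by abel⟩
    rw [dense_iff_closure_eq]
    exact eq_univ_of_univ_subset (hMuniv ▸ hMΩ)
  · exfalso
    set F : UnitAddCircle × UnitAddCircle → UnitAddCircle × UnitAddCircle :=
      fun p => (p.1, m • p.2) with hF
    set T' : UnitAddCircle × UnitAddCircle → UnitAddCircle × UnitAddCircle :=
      fun p => (p.1 + a, p.2 + m • p.1 + m • b) with hT'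
    have hFT : ∀ p, F (T p) = T' (F p) := by
      intro p
      show (p.1 + a, m • (p.2 + p.1 + b)) = (p.1 + a, m • p.2 + m • p.1 + m • b)
      rw [Prod.mk.injEq]
      exact ⟨rfl, by rw [smul_add, smul_add]⟩
    set M' := F '' M with hM'
    have hFc : Continuous F := by rw [hF]; fun_prop
    have hM'cpt : IsCompact M' := hMcpt.image hFc
    have hM'inv : T' '' M' = M' := by
      rw [hM', image_image]
      simp only [← hFT]
      rw [← image_image, hTM]
    have hM'iter : ∀ (n : ℕ), ∀ p ∈ M', T'^[n] p ∈ M' := by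
      intro n
      induction n with
      | zero => simpa using fun p h => h
      | succ k ih =>
        intro p hp
        rw [Function.iterate_succ_apply']
        exact hM'inv ▸ mem_image_of_mem T' (ih p hp)
    have hfib : ∀ (x w₁ w₂ : UnitAddCircle), (x, w₁) ∈ M' → (x, w₂) ∈ M' → w₁ = w₂ := by
      rintro x w₁ w₂ ⟨p₁, hp₁, he₁⟩ ⟨p₂, hp₂, he₂⟩
      rw [hF, Prod.mk.injEq] at he₁ he₂
      obtain ⟨hx₁, hw₁⟩ := he₁
      obtain ⟨hx₂, hw₂⟩ := he₂
      have hsmem : (p₂.2 - p₁.2) ∈ HK := by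
        apply hdich
        refine ⟨p₂, ⟨⟨p₁, hp₁, ?_⟩, hp₂⟩⟩
        show (p₁.1, p₁.2 + (p₂.2 - p₁.2)) = p₂
        rw [Prod.mk.injEq]
        exact ⟨hx₁.trans hx₂.symm, by abel⟩
      have h0 : m • (p₂.2 - p₁.2) = 0 := hann _ hsmem
      rw [smul_sub, sub_eq_zero] at h0
      rw [← hw₁, ← hw₂, h0]
    have hM'fst : ∀ x : UnitAddCircle, ∃ w, (x, w) ∈ M' := by
      intro x
      have hx : x ∈ C := hCuniv ▸ mem_univ _
      obtain ⟨q, hq, hq1⟩ := hx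
      exact ⟨m • q.2, ⟨q, hq, by rw [hF]; exact congrArg (·, m • q.2) hq1⟩⟩
    -- uniform separation of fibers
    have hunif : ∃ δ > 0, ∀ p ∈ M', ∀ q ∈ M', dist p.1 q.1 < δ → dist p.2 q.2 < 1/2 := by
      by_contra hcon
      push_neg at hcon
      choose p hpM q hqM hd1 hd2 using fun k : ℕ => hcon (1 / ((k : ℝ) + 1)) (by positivity)
      obtain ⟨P, hPM, φ, hφ, hPt⟩ := hM'cpt.tendsto_subseq hpM
      obtain ⟨Q, hQM, ψ, hψ, hQt⟩ := hM'cpt.tendsto_subseq (fun k => hqM (φ k))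
      have hPt' : Tendsto (fun k => p (φ (ψ k))) atTop (𝓝 P) := by
        have := hPt.comp hψ.tendsto_atTop
        simpa [Function.comp_def] using this
      have hQt' : Tendsto (fun k => q (φ (ψ k))) atTop (𝓝 Q) := by
        simpa [Function.comp_def] using hQt
      have hdist1 : Tendsto (fun k => dist (p (φ (ψ k))).1 (q (φ (ψ k))).1) atTop
          (𝓝 (dist P.1 Q.1)) :=
        ((continuous_fst.tendsto P).comp hPt').dist ((continuous_fst.tendsto Q).comp hQt')
      have hdist2 : Tendsto (fun k => dist (p (φ (ψ k))).2 (q (φ (ψ k))).2) atTop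
          (𝓝 (dist P.2 Q.2)) :=
        ((continuous_snd.tendsto P).comp hPt').dist ((continuous_snd.tendsto Q).comp hQt')
      have hbound : Tendsto (fun k : ℕ => 1 / ((φ (ψ k) : ℝ) + 1)) atTop (𝓝 0) :=
        tendsto_one_div_add_atTop_nhds_zero_nat.comp (hφ.comp hψ).tendsto_atTop
      have h11 : dist P.1 Q.1 ≤ 0 :=
        le_of_tendsto_of_tendsto' hdist1 hbound (fun k => (hd1 _).le)
      have hPQ1 : P.1 = Q.1 := by
        have := dist_le_zero.mp h11
        exact this
      have h22 : 1/2 ≤ dist P.2 Q.2 :=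
        ge_of_tendsto hdist2 (Eventually.of_forall fun k => hd2 _)
      have hPQ2 : P.2 = Q.2 := by
        apply hfib P.1 P.2 Q.2
        · simpa using hPM
        · rw [hPQ1]; simpa using hQM
      rw [hPQ2] at h22
      simp at h22
      linarith
    obtain ⟨δ, hδ, hu⟩ := hunif
    -- find n ≥ 1 with ‖n • a‖ < δ
    obtain ⟨x, φ, hφ, hxt⟩ := CompactSpace.tendsto_subseq (fun k : ℕ => k • a)
    have hcauchy : ∀ᶠ k in atTop, dist ((fun k : ℕ => k • a) (φ k)) x < δ / 2 := by
      have := Metric.tendsto_nhds.mp hxt (δ / 2) (by positivity)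
      simpa [Function.comp] using this
    obtain ⟨K, hK⟩ := eventually_atTop.mp hcauchy
    have hmono : φ K ≤ φ (K + 1) := (hφ (by omega : K < K + 1)).le
    set n := φ (K + 1) - φ K with hn
    have hn1 : 1 ≤ n := by
      have h7 := hφ (by omega : K < K + 1)
      rw [hn]
      omega
    have hnδ : ‖n • a‖ < δ := by
      have hna : n • a = φ (K + 1) • a - φ K • a := by
        rw [hn, sub_nsmul a hmono, ← sub_eq_add_neg]
      rw [hna, ← dist_eq_norm]
      calc dist (φ (K + 1) • a) (φ K • a)
          ≤ dist (φ (K + 1) • a) x + dist x (φ K • a) := dist_triangle _ _ _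
        _ < δ / 2 + δ / 2 := by
            have h1 := hK (K + 1) (Nat.le_succ K)
            have h2 := hK K le_rfl
            rw [dist_comm x (φ K • a)]
            exact add_lt_add h1 h2
        _ = δ := by ring
    -- iteration formula for T'
    have hiter : ∀ (k : ℕ) (x y : UnitAddCircle),
        T'^[k] (x, y) =
          (x + k • a, y + m • (k • x) + (m • ((k.choose 2) • a) + k • (m • b))) := by
      intro k
      induction k with
      | zero => intro x y; simp
      | succ k ih =>
        intro x y
        rw [Function.iterate_succ_apply', ih]
        show (x + k • a + a,
            (y + m • (k • x) + (m • ((k.choose 2) • a) + k • (m • b))) + m • (x + k • a) + m • b)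
          = _
        have hch : (k + 1).choose 2 = k.choose 2 + k := by
          rw [Nat.choose_succ_succ, Nat.choose_one_right]
          exact Nat.add_comm _ _
        rw [Prod.mk.injEq]
        constructor
        · rw [succ_nsmul, ← add_assoc]
        · rw [hch, succ_nsmul x k, succ_nsmul (m • b) k, add_nsmul, smul_add, smul_add, smul_add]
          abel
    -- choose the magic base point
    obtain ⟨x₀, hx₀⟩ : ∃ x₀ : UnitAddCircle,
        (m * n) • x₀ = ((1/2 : ℝ) : UnitAddCircle) - (m • ((n.choose 2) • a) + n • (m • b)) := by
      obtain ⟨r, hr⟩ := QuotientAddGroup.mk'_surjective (AddSubgroup.zmultiples (1 : ℝ))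
        (((1/2 : ℝ) : UnitAddCircle) - (m • ((n.choose 2) • a) + n • (m • b)))
      refine ⟨((r / ((m : ℝ) * (n : ℝ))) : UnitAddCircle), ?_⟩
      rw [← AddCircle.coe_nsmul]
      have hsm : (m * n : ℕ) • (r / ((m : ℝ) * (n : ℝ))) = r := by
        have h1 : (0:ℝ) < (m : ℝ) := by exact_mod_cast hm
        have h2 : (0:ℝ) < (n : ℝ) := by exact_mod_cast hn1
        rw [nsmul_eq_mul]
        push_cast
        field_simp
      rw [hsm]
      exact hr
    obtain ⟨y₀, hy₀⟩ := hM'fst x₀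
    have hq' := hM'iter n _ hy₀
    rw [hiter n x₀ y₀] at hq'
    have h2 : y₀ + m • (n • x₀) + (m • ((n.choose 2) • a) + n • (m • b))
        = y₀ + ((1/2 : ℝ) : UnitAddCircle) := by
      rw [← mul_nsmul x₀ n m, Nat.mul_comm n m, hx₀]
      abel
    have hd1' : dist x₀ (x₀ + n • a) < δ := by
      rw [dist_eq_norm]
      simpa using hnδ
    have hkey := hu _ hy₀ _ hq' hd1'
    dsimp only at hkey
    rw [h2] at hkey
    have hhalf : dist y₀ (y₀ + ((1/2 : ℝ) : UnitAddCircle)) = 1/2 := by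
      rw [dist_eq_norm]
      have h8 : y₀ - (y₀ + ((1/2 : ℝ) : UnitAddCircle)) = -(((1/2 : ℝ)) : UnitAddCircle) := by abel
      rw [h8, norm_neg, UnitAddCircle.norm_eq, round_eq]
      norm_num
    rw [hhalf] at hkey
    linarith
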